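/- For a partition λ, positive integers r, s, and each j ∈ ℤ/sℤ, the j-component of the s-quotient of the rs-core of λ equals the r-core of the j-component of the s-quotient of λ. -/

import Mathlib

open Classical

/-- A partition: an infinite weakly decreasing sequence of non-negative integers
with finite sum.  Here `f n` denotes the part `λ_{n+1}`. -/
structure LPartition where
  f : ℕ → ℕ
  antitone : ∀ ⦃m n : ℕ⦄, m ≤ n → f n ≤ f m
  eventually_zero : ∃ N, ∀ n, N ≤ n → f n = 0

instance : Inhabited LPartition :=
  ⟨⟨fun _ => 0, fun _ _ _ => le_rfl, ⟨0, fun _ _ => rfl⟩⟩⟩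

namespace LPartition

/-- The beta-set `β_r(λ) = {λ_i - i + r : i ≥ 1}`. -/
def beta (r : ℤ) (l : LPartition) : Set ℤ :=
  {x | ∃ n : ℕ, x = (l.f n : ℤ) - (n + 1) + r}

/-- The size `|λ|` of a partition. -/
noncomputable def size (l : LPartition) : ℕ := ∑ᶠ n, l.f n

/-- The partition whose beta-set (for some shift `r`) is `B`, if it exists. -/
noncomputable def ofBeta (B : Set ℤ) : LPartition :=
  if h : ∃ l : LPartition, ∃ r : ℤ, beta r l = B then h.choose else default

/-- The beta-set of the `s`-core: beads pushed up their runners as far as possible.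
A position `x` is occupied iff the number of beads of `B` weakly above it on its runner
exceeds the number of gaps strictly below it on its runner. -/
def coreBeta (s : ℕ) (B : Set ℤ) : Set ℤ :=
  {x | ({y : ℤ | y ∉ B ∧ y ≡ x [ZMOD (s : ℤ)] ∧ y < x}).ncard
      < ({b : ℤ | b ∈ B ∧ b ≡ x [ZMOD (s : ℤ)] ∧ x ≤ b}).ncard}

/-- The `s`-core of a partition. -/
noncomputable def core (s : ℕ) (l : LPartition) : LPartition :=
  ofBeta (coreBeta s (beta 0 l))

/-- `λ` is an `s`-core. -/
def IsCore (s : ℕ) (l : LPartition) : Prop := core s l = l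

/-- The `s`-weight of `λ`. -/
noncomputable def wt (s : ℕ) (l : LPartition) : ℕ := (size l - size (core s l)) / s

/-- The component of the `s`-quotient of `λ` indexed by `j : ZMod s`. -/
noncomputable def quot (s : ℕ) (l : LPartition) (j : ZMod s) : LPartition :=
  ofBeta {z : ℤ | ((j.val : ℤ) + (s : ℤ) * z) ∈ beta 0 l}

/-- The `s`-set entry `Γ_j(λ)`: the smallest integer in the class `j` mod `s`
not lying in the beta-set of the `s`-core of `λ`. -/
noncomputable def sSet (s : ℕ) (l : LPartition) (j : ZMod s) : ℤ :=
  sInf {x : ℤ | (x : ZMod s) = j ∧ x ∉ beta 0 (core s l)}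

/-- `λ` is an `[s:t]`-core. -/
def IsGenCore (s t : ℕ) (l : LPartition) : Prop :=
  wt s (core t l) = wt s l

/-- The level `t` action of the generator `w_i` of the affine symmetric group `W_s` on `ℤ`. -/
def genActZ (s t : ℕ) (i : ZMod s) (n : ℤ) : ℤ :=
  if (n : ZMod s) = (i - 1) * (t : ZMod s) - ((((s : ℤ) - 1) * ((t : ℤ) - 1) / 2 : ℤ) : ZMod s)
    then n + t
  else if (n : ZMod s) = i * (t : ZMod s) - ((((s : ℤ) - 1) * ((t : ℤ) - 1) / 2 : ℤ) : ZMod s)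
    then n - t
  else n

/-- The level `t` action of the generator `w_i` of `W_s` on partitions, via beta-sets. -/
noncomputable def genAct (s t : ℕ) (i : ZMod s) (l : LPartition) : LPartition :=
  ofBeta (genActZ s t i '' beta 0 l)

/-- The action of a word in the generators of `W_s`, at level `t`, on partitions. -/
noncomputable def wordAct (s t : ℕ) (w : List (ZMod s)) (l : LPartition) : LPartition :=
  w.foldr (genAct s t) l

/-- `λ` and `μ` lie in the same orbit for the level `t` action of `W_s`. -/
def SameOrbit (s t : ℕ) (l m : LPartition) : Prop :=
  ∃ w : List (ZMod s), wordAct s t w l = m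

/-- `λ` and `μ` lie in the same orbit for the commuting actions of `W_s` (level `t`)
and `W_t` (level `s`). -/
def SameOrbit2 (s t : ℕ) (l m : LPartition) : Prop :=
  ∃ a : List (ZMod s), ∃ b : List (ZMod t), wordAct s t a (wordAct t s b l) = m

/-- The `t`-weighted `s`-quotient of `λ`: the multiset of pairs
`(Γ_i(λ) + tℤ, λ^(i))` over `i ∈ ℤ/sℤ`. -/
noncomputable def twq (s t : ℕ) (l : LPartition) : Multiset (ZMod t × LPartition) :=
  ((List.range s).map (fun i =>
    (((sSet s l (i : ZMod s) : ℤ) : ZMod t), quot s l (i : ZMod s))) : Multiset _)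

/-- The largest `(s,t)`-core `κ_{s,t}`: the partition whose beta-set is the set of
integers not expressible as a non-negative integer combination of `s` and `t`. -/
noncomputable def kappa (s t : ℕ) : LPartition :=
  ofBeta {x : ℤ | ¬ ∃ a b : ℕ, x = (a : ℤ) * s + (b : ℤ) * t}

end LPartition

namespace LPartition

private def vseq (l : LPartition) (r : ℤ) (n : ℕ) : ℤ := (l.f n : ℤ) - (n + 1) + r

lemma beta_eq_range (r : ℤ) (l : LPartition) : beta r l = Set.range (vseq l r) := by
  ext x
  simp only [beta, Set.mem_setOf_eq, Set.mem_range, vseq, eq_comm]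

lemma strictAnti_vseq (l : LPartition) (r : ℤ) : StrictAnti (vseq l r) := by
  apply strictAnti_nat_of_succ_lt
  intro n
  have h : l.f (n + 1) ≤ l.f n := l.antitone (Nat.le_succ n)
  simp only [vseq]
  push_cast
  omega

/-- A set of integers that is co-bounded below and bounded above. -/
def Valid (B : Set ℤ) : Prop :=
  (∃ N : ℤ, ∀ x : ℤ, x < N → x ∈ B) ∧ (∃ M : ℤ, ∀ x ∈ B, x < M)

lemma valid_beta (r : ℤ) (l : LPartition) : Valid (beta r l) := by
  obtain ⟨N, hN⟩ := l.eventually_zero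
  constructor
  · refine ⟨r - N - 1, fun x hx => ?_⟩
    refine ⟨(r - 1 - x).toNat, ?_⟩
    have h2 : ((r - 1 - x).toNat : ℤ) = r - 1 - x := Int.toNat_of_nonneg (by omega)
    have h3 : l.f (r - 1 - x).toNat = 0 := hN _ (by omega)
    rw [h3]
    push_cast
    omega
  · refine ⟨(l.f 0 : ℤ) + r, fun x hx => ?_⟩
    obtain ⟨n, rfl⟩ := hx
    have h : (l.f n : ℤ) ≤ l.f 0 := by exact_mod_cast l.antitone (Nat.zero_le n)
    have hn : (0:ℤ) ≤ n := Int.natCast_nonneg n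
    omega

lemma partition_ext {m m' : LPartition} (h : ∀ n, m.f n = m'.f n) : m = m' := by
  cases m; cases m'
  simp only [mk.injEq]
  exact funext h

lemma exists_of_valid {B : Set ℤ} (hB : Valid B) :
    ∃ (m : LPartition) (ρ : ℤ), beta ρ m = B := by
  obtain ⟨⟨N, hN⟩, ⟨Mu, hMu⟩⟩ := hB
  have hg : ∀ c : ℤ, ∃ y, (y ∈ B ∧ y < c) ∧ ∀ x ∈ B, x < c → x ≤ y := by
    intro c
    have h1 : ∃ z : ℤ, z ∈ B ∧ z < c := ⟨min c N - 1, hN _ (by omega), by omega⟩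
    have h2 : ∃ b : ℤ, ∀ z : ℤ, (z ∈ B ∧ z < c) → z ≤ b := ⟨c, fun z hz => hz.2.le⟩
    obtain ⟨lb, hlb1, hlb2⟩ := Int.exists_greatest_of_bdd h2 h1
    exact ⟨lb, hlb1, fun x hx hxc => hlb2 x ⟨hx, hxc⟩⟩
  choose g hg1 hg2 using hg
  set b : ℕ → ℤ := fun n => Nat.rec (g Mu) (fun _ ih => g ih) n with hb
  have hbs : ∀ n, b (n + 1) = g (b n) := fun n => rfl
  have hmem : ∀ n, b n ∈ B := by
    intro n
    induction n with
    | zero => exact (hg1 Mu).1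
    | succ n ih => exact (hg1 (b n)).1
  have hdec : ∀ n, b (n + 1) < b n := fun n => (hg1 (b n)).2
  have hmax : ∀ x ∈ B, x ≤ b 0 := fun x hx => hg2 Mu x hx (hMu x hx)
  have hstep : ∀ n, ∀ x ∈ B, x < b n → x ≤ b (n + 1) :=
    fun n x hx h => hg2 (b n) x hx h
  have hle : ∀ n : ℕ, b n ≤ b 0 - n := by
    intro n
    induction n with
    | zero => simp
    | succ n ih =>
      have h := hdec n
      push_cast
      push_cast at ih
      omega
  have hsurj : ∀ x ∈ B, ∃ n, b n = x := by
    intro x hx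
    have hex : ∃ n : ℕ, b n ≤ x := by
      refine ⟨(b 0 - x).toNat, ?_⟩
      have h1 := hle (b 0 - x).toNat
      have h2 : (b 0 - x) ≤ ((b 0 - x).toNat : ℤ) := Int.self_le_toNat _
      omega
    have hn := Nat.find_spec hex
    cases hfind : Nat.find hex with
    | zero =>
      rw [hfind] at hn
      exact ⟨0, le_antisymm hn (hmax x hx)⟩
    | succ k =>
      rw [hfind] at hn
      have hk : ¬ b k ≤ x := Nat.find_min hex (by omega)
      exact ⟨k + 1, le_antisymm hn (hstep k x hx (by omega))⟩
  have htail : ∀ n, b n < N → b (n + 1) = b n - 1 := by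
    intro n h
    have h1 : b n - 1 ∈ B := hN _ (by omega)
    have h2 : b n - 1 ≤ b (n + 1) := hstep n _ h1 (by omega)
    have h3 := hdec n
    omega
  set n₁ : ℕ := (b 0 - N + 1).toNat with hn₁
  have hbn₁ : b n₁ < N := by
    have h1 := hle n₁
    have h2 : (b 0 - N + 1) ≤ (n₁ : ℤ) := Int.self_le_toNat _
    omega
  have htail2 : ∀ j : ℕ, b (n₁ + j) = b n₁ - j := by
    intro j
    induction j with
    | zero => simp
    | succ k ih =>
      have hlt : b (n₁ + k) < N := by
        rw [ih]
        have : (0:ℤ) ≤ k := Int.natCast_nonneg k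
        omega
      have h := htail _ hlt
      rw [show n₁ + (k + 1) = (n₁ + k) + 1 from rfl, h, ih]
      push_cast
      ring
  set ρ : ℤ := b n₁ + n₁ + 1 with hρ
  have hkey : ∀ n, n₁ ≤ n → b n + n + 1 = ρ := by
    intro n hn
    obtain ⟨j, rfl⟩ := Nat.exists_eq_add_of_le hn
    rw [htail2 j]
    push_cast
    ring
  have hmono : ∀ p q : ℕ, p ≤ q → b q + q ≤ b p + p := by
    intro p q hpq
    obtain ⟨j, rfl⟩ := Nat.exists_eq_add_of_le hpq
    clear hpq
    induction j with
    | zero => simp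
    | succ k ih =>
      have h := hdec (p + k)
      have e : p + (k + 1) = (p + k) + 1 := rfl
      rw [e]
      push_cast at ih ⊢
      omega
  have hnn : ∀ n : ℕ, 0 ≤ b n + n + 1 - ρ := by
    intro n
    rcases le_total n n₁ with h | h
    · have h1 := hmono n n₁ h
      omega
    · have h1 := hkey n h
      omega
  refine ⟨⟨fun n => (b n + n + 1 - ρ).toNat, ?_, ⟨n₁, ?_⟩⟩, ρ, ?_⟩
  · intro p q hpq
    have h1 := hmono p q hpq
    have h2 := hnn p
    have h3 := hnn q
    show (b q + q + 1 - ρ).toNat ≤ (b p + p + 1 - ρ).toNat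
    omega
  · intro n hn
    have h := hkey n hn
    show (b n + n + 1 - ρ).toNat = 0
    omega
  · ext x
    simp only [beta, Set.mem_setOf_eq]
    constructor
    · rintro ⟨n, rfl⟩
      have h2 : (((b n + n + 1 - ρ).toNat : ℤ)) = b n + n + 1 - ρ := Int.toNat_of_nonneg (hnn n)
      show ((b n + n + 1 - ρ).toNat : ℤ) - (n + 1) + ρ ∈ B
      have h5 : ((b n + n + 1 - ρ).toNat : ℤ) - (n + 1) + ρ = b n := by omega
      rw [h5]
      exact hmem n
    · intro hx
      obtain ⟨n, rfl⟩ := hsurj x hx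
      refine ⟨n, ?_⟩
      have h2 : (((b n + n + 1 - ρ).toNat : ℤ)) = b n + n + 1 - ρ := Int.toNat_of_nonneg (hnn n)
      show b n = ((b n + n + 1 - ρ).toNat : ℤ) - (n + 1) + ρ
      omega

lemma chg_eq {ρ : ℤ} {m : LPartition} {B : Set ℤ} (h : beta ρ m = B)
    {M Mu : ℤ} (hlo : ∀ x : ℤ, x < M → x ∈ B) (hhi : ∀ x ∈ B, x < Mu) :
    ρ = M + ((B ∩ Set.Ici M).ncard : ℤ) := by
  obtain ⟨N0, hN0⟩ := m.eventually_zero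
  set N : ℕ := N0 + (ρ - M).toNat with hN
  have hNge : ρ - M - 1 ≤ (N : ℤ) := by
    have h1 : (ρ - M) ≤ ((ρ - M).toNat : ℤ) := Int.self_le_toNat _
    omega
  have hfN : ∀ n : ℕ, N ≤ n → m.f n = 0 := fun n hn => hN0 n (by omega)
  set M₀ : ℤ := ρ - N - 1 with hM₀
  have hM₀M : M₀ ≤ M := by omega
  have him : B ∩ Set.Ici M₀ = vseq m ρ '' Set.Iic N := by
    ext x
    constructor
    · rintro ⟨hxB, hx⟩
      rw [← h] at hxB
      obtain ⟨n, rfl⟩ := hxB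
      refine ⟨n, ?_, rfl⟩
      simp only [Set.mem_Iic]
      by_contra hc
      push_neg at hc
      have h1 : m.f n = 0 := hfN n (by omega)
      simp only [Set.mem_Ici, h1] at hx
      have h2 : (N : ℤ) < n := by exact_mod_cast hc
      push_cast at hx
      omega
    · rintro ⟨n, hn, rfl⟩
      have hn' : (n : ℤ) ≤ N := by exact_mod_cast hn
      constructor
      · rw [← h]
        exact ⟨n, rfl⟩
      · simp only [Set.mem_Ici, vseq]
        have : (0:ℤ) ≤ m.f n := Int.natCast_nonneg _
        omega
  have hcard : (B ∩ Set.Ici M₀).ncard = N + 1 := by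
    rw [him, Set.ncard_image_of_injective _ (strictAnti_vseq m ρ).injective]
    rw [← Finset.coe_Iic, Set.ncard_coe_finset, Nat.card_Iic]
  have hdecomp : B ∩ Set.Ici M₀ = (Set.Ico M₀ M) ∪ (B ∩ Set.Ici M) := by
    ext x
    simp only [Set.mem_inter_iff, Set.mem_Ici, Set.mem_union, Set.mem_Ico]
    constructor
    · rintro ⟨hxB, hx⟩
      rcases lt_or_ge x M with h1 | h1
      · exact Or.inl ⟨hx, h1⟩
      · exact Or.inr ⟨hxB, h1⟩
    · rintro (⟨h1, h2⟩ | ⟨h1, h2⟩)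
      · exact ⟨hlo x h2, h1⟩
      · exact ⟨h1, le_trans hM₀M h2⟩
  have hfinB : (B ∩ Set.Ici M).Finite :=
    Set.Finite.subset (Set.finite_Ico M Mu) (fun x hx => ⟨hx.2, hhi x hx.1⟩)
  have hdisj : Disjoint (Set.Ico M₀ M) (B ∩ Set.Ici M) := by
    rw [Set.disjoint_left]
    rintro x ⟨_, h1⟩ ⟨_, h2⟩
    exact absurd h2 (not_le.2 h1)
  have hu := Set.ncard_union_eq hdisj (Set.finite_Ico _ _) hfinB
  rw [hdecomp, hu] at hcard
  have hIco : (Set.Ico M₀ M).ncard = (M - M₀).toNat := by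
    rw [← Finset.coe_Ico, Set.ncard_coe_finset, Int.card_Ico]
  rw [hIco] at hcard
  omega

lemma beta_inj {ρ ρ' : ℤ} {m m' : LPartition} (h : beta ρ m = beta ρ' m') :
    ρ = ρ' ∧ m = m' := by
  obtain ⟨⟨N, hN⟩, ⟨Mu, hMu⟩⟩ := valid_beta ρ m
  have e1 : ρ = N + (((beta ρ m) ∩ Set.Ici N).ncard : ℤ) := chg_eq rfl hN hMu
  have e2 : ρ' = N + (((beta ρ m) ∩ Set.Ici N).ncard : ℤ) := chg_eq h.symm hN hMu
  have hρ : ρ = ρ' := by omega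
  subst hρ
  refine ⟨rfl, ?_⟩
  have hr : Set.range (vseq m ρ) = Set.range (vseq m' ρ) := by
    rw [← beta_eq_range, ← beta_eq_range, h]
  have hmono1 : StrictMono (Neg.neg ∘ vseq m ρ) :=
    fun p q hpq => neg_lt_neg ((strictAnti_vseq m ρ) hpq)
  have hmono2 : StrictMono (Neg.neg ∘ vseq m' ρ) :=
    fun p q hpq => neg_lt_neg ((strictAnti_vseq m' ρ) hpq)
  have hre : Set.range (Neg.neg ∘ vseq m ρ) = Set.range (Neg.neg ∘ vseq m' ρ) := by
    rw [Set.range_comp, Set.range_comp, hr]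
  have hfe := (StrictMono.range_inj hmono1 hmono2).mp hre
  apply partition_ext
  intro n
  have h1 := congrFun hfe n
  simp only [Function.comp_apply, vseq, neg_inj] at h1
  omega

lemma ofBeta_eq {ρ : ℤ} {m : LPartition} {B : Set ℤ} (h : beta ρ m = B) : ofBeta B = m := by
  have hex : ∃ l : LPartition, ∃ r : ℤ, beta r l = B := ⟨m, ρ, h⟩
  rw [ofBeta, dif_pos hex]
  obtain ⟨r', hr'⟩ := hex.choose_spec
  exact (beta_inj (hr'.trans h.symm)).2

lemma beta_shift (ρ : ℤ) (l : LPartition) : beta ρ l = (fun x => x + ρ) '' beta 0 l := by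
  ext x
  simp only [beta, Set.mem_image, Set.mem_setOf_eq]
  constructor
  · rintro ⟨n, rfl⟩
    exact ⟨(l.f n : ℤ) - (n + 1) + 0, ⟨n, rfl⟩, by ring⟩
  · rintro ⟨y, ⟨n, rfl⟩, rfl⟩
    exact ⟨n, by ring⟩

private lemma core_mem_shift (t : ℕ) (k : ℤ) (B : Set ℤ) (x : ℤ) :
    x ∈ coreBeta t B ↔ x + k ∈ coreBeta t ((fun y => y + k) '' B) := by
  have hinj : Function.Injective (fun y : ℤ => y + k) := add_left_injective k
  have h1 : {y : ℤ | y ∉ (fun y => y + k) '' B ∧ y ≡ x + k [ZMOD (t:ℤ)] ∧ y < x + k}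
      = (fun y => y + k) '' {y : ℤ | y ∉ B ∧ y ≡ x [ZMOD (t:ℤ)] ∧ y < x} := by
    ext y
    simp only [Set.mem_image, Set.mem_setOf_eq]
    constructor
    · rintro ⟨ha, hb, hc⟩
      refine ⟨y - k, ⟨?_, ?_, by omega⟩, by ring⟩
      · intro hmem
        exact ha ⟨y - k, hmem, by ring⟩
      · have := hb.sub_right k
        simpa using this
    · rintro ⟨w, ⟨ha, hb, hc⟩, rfl⟩
      refine ⟨?_, hb.add_right k, by omega⟩
      intro hmem
      obtain ⟨u, hu, he⟩ := hmem
      have : u = w := by omega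
      exact ha (this ▸ hu)
  have h2 : {y : ℤ | y ∈ (fun y => y + k) '' B ∧ y ≡ x + k [ZMOD (t:ℤ)] ∧ x + k ≤ y}
      = (fun y => y + k) '' {y : ℤ | y ∈ B ∧ y ≡ x [ZMOD (t:ℤ)] ∧ x ≤ y} := by
    ext y
    simp only [Set.mem_image, Set.mem_setOf_eq]
    constructor
    · rintro ⟨ha, hb, hc⟩
      obtain ⟨u, hu, he⟩ := ha
      refine ⟨y - k, ⟨?_, ?_, by omega⟩, by ring⟩
      · have : u = y - k := by omega
        exact this ▸ hu
      · have := hb.sub_right k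
        simpa using this
    · rintro ⟨w, ⟨ha, hb, hc⟩, rfl⟩
      exact ⟨⟨w, ha, rfl⟩, hb.add_right k, by omega⟩
  show _ ↔ _
  simp only [coreBeta, Set.mem_setOf_eq]
  rw [h1, h2, Set.ncard_image_of_injective _ hinj, Set.ncard_image_of_injective _ hinj]

lemma coreBeta_shift (t : ℕ) (k : ℤ) (B : Set ℤ) :
    coreBeta t ((fun y => y + k) '' B) = (fun y => y + k) '' coreBeta t B := by
  ext x
  constructor
  · intro hx
    refine ⟨x - k, ?_, by ring⟩
    have h := core_mem_shift t k B (x - k)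
    rw [sub_add_cancel] at h
    exact h.mpr hx
  · rintro ⟨y, hy, rfl⟩
    exact (core_mem_shift t k B y).mp hy

lemma main_bij (r s : ℕ) (hr : 0 < r) (hs : 0 < s) (a : ℤ) (B : Set ℤ) :
    {z : ℤ | a + (s:ℤ) * z ∈ coreBeta (r * s) B}
      = coreBeta r {z : ℤ | a + (s:ℤ) * z ∈ B} := by
  have hsz : (0:ℤ) < s := by exact_mod_cast hs
  have hinj : Function.Injective (fun w : ℤ => a + (s:ℤ)*w) := by
    intro u v huv
    simp only [add_right_inj] at huv
    exact mul_left_cancel₀ hsz.ne' huv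
  ext z
  simp only [Set.mem_setOf_eq, coreBeta]
  have hG : {y : ℤ | y ∉ B ∧ y ≡ a + (s:ℤ)*z [ZMOD ((r*s : ℕ):ℤ)] ∧ y < a + (s:ℤ)*z}
      = (fun w => a + (s:ℤ)*w) ''
        {w : ℤ | a + (s:ℤ)*w ∉ B ∧ w ≡ z [ZMOD (r:ℤ)] ∧ w < z} := by
    ext y
    simp only [Set.mem_image, Set.mem_setOf_eq]
    constructor
    · rintro ⟨h1, h2, h3⟩
      obtain ⟨d, hd⟩ := h2.dvd
      have hy : y = a + (s:ℤ)*(z - (r:ℤ)*d) := by push_cast at hd; linear_combination -hd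
      refine ⟨z - (r:ℤ)*d, ⟨?_, ?_, ?_⟩, hy.symm⟩
      · rw [← hy]; exact h1
      · rw [Int.modEq_iff_dvd]; exact ⟨d, by ring⟩
      · rw [hy] at h3; nlinarith
    · rintro ⟨w, ⟨h1, h2, h3⟩, rfl⟩
      refine ⟨h1, ?_, by nlinarith⟩
      rw [Int.modEq_iff_dvd] at h2 ⊢
      obtain ⟨d, hd⟩ := h2
      exact ⟨d, by push_cast; linear_combination (s:ℤ)*hd⟩
  have hD : {y : ℤ | y ∈ B ∧ y ≡ a + (s:ℤ)*z [ZMOD ((r*s : ℕ):ℤ)] ∧ a + (s:ℤ)*z ≤ y}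
      = (fun w => a + (s:ℤ)*w) ''
        {w : ℤ | a + (s:ℤ)*w ∈ B ∧ w ≡ z [ZMOD (r:ℤ)] ∧ z ≤ w} := by
    ext y
    simp only [Set.mem_image, Set.mem_setOf_eq]
    constructor
    · rintro ⟨h1, h2, h3⟩
      obtain ⟨d, hd⟩ := h2.dvd
      have hy : y = a + (s:ℤ)*(z - (r:ℤ)*d) := by push_cast at hd; linear_combination -hd
      refine ⟨z - (r:ℤ)*d, ⟨?_, ?_, ?_⟩, hy.symm⟩
      · rw [← hy]; exact h1
      · rw [Int.modEq_iff_dvd]; exact ⟨d, by ring⟩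
      · rw [hy] at h3; nlinarith
    · rintro ⟨w, ⟨h1, h2, h3⟩, rfl⟩
      refine ⟨h1, ?_, by nlinarith⟩
      rw [Int.modEq_iff_dvd] at h2 ⊢
      obtain ⟨d, hd⟩ := h2
      exact ⟨d, by push_cast; linear_combination (s:ℤ)*hd⟩
  rw [hG, hD, Set.ncard_image_of_injective _ hinj, Set.ncard_image_of_injective _ hinj]

lemma coreBeta_mem_iff (t : ℕ) (ht : 0 < t) {B : Set ℤ} {N₁ Mu : ℤ}
    (hlo : ∀ x : ℤ, x < (t:ℤ)*N₁ → x ∈ B) (hhi : ∀ x ∈ B, x < Mu)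
    (i q : ℤ) (hi0 : 0 ≤ i) (hit : i < (t:ℤ)) :
    (i + (t:ℤ)*q) ∈ coreBeta t B ↔
      q < N₁ + (({m : ℤ | N₁ ≤ m ∧ i + (t:ℤ)*m ∈ B}).ncard : ℤ) := by
  have htz : (0:ℤ) < t := lt_of_le_of_lt hi0 hit
  have ht1 : (1:ℤ) ≤ t := htz
  have hinj : Function.Injective (fun w : ℤ => i + (t:ℤ)*w) := by
    intro u v huv
    simp only [add_right_inj] at huv
    exact mul_left_cancel₀ htz.ne' huv
  have hlow : ∀ w : ℤ, w < N₁ → i + (t:ℤ)*w ∈ B := by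
    intro w hw
    apply hlo
    have h1 : (t:ℤ)*w ≤ t*(N₁-1) := mul_le_mul_of_nonneg_left (by omega) htz.le
    have h2 : (t:ℤ)*(N₁-1) = t*N₁ - t := by ring
    omega
  have hfin : ∀ c : ℤ, ({w : ℤ | c ≤ w ∧ i + (t:ℤ)*w ∈ B}).Finite := by
    intro c
    apply Set.Finite.subset (Set.finite_Ico c (max (Mu - i) 1))
    rintro w ⟨h1, h2⟩
    refine ⟨h1, ?_⟩
    have h3 := hhi _ h2
    rcases le_or_gt w 0 with hw | hw
    · exact lt_of_le_of_lt hw (lt_of_lt_of_le one_pos (le_max_right _ _))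
    · have h4 : w ≤ (t:ℤ)*w := le_mul_of_one_le_left hw.le ht1
      have h5 : w < Mu - i := by omega
      exact lt_of_lt_of_le h5 (le_max_left _ _)
  have hGim : {y : ℤ | y ∉ B ∧ y ≡ i + (t:ℤ)*q [ZMOD (t:ℤ)] ∧ y < i + (t:ℤ)*q}
      = (fun w => i + (t:ℤ)*w) ''
        (Set.Ico N₁ q \ {m : ℤ | N₁ ≤ m ∧ i + (t:ℤ)*m ∈ B}) := by
    ext y
    simp only [Set.mem_image, Set.mem_diff, Set.mem_Ico, Set.mem_setOf_eq]
    constructor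
    · rintro ⟨h1, h2, h3⟩
      obtain ⟨d, hd⟩ := h2.dvd
      have hy : y = i + (t:ℤ)*(q - d) := by linear_combination -hd
      have hwq : q - d < q := by nlinarith [hy, h3]
      have hwN : N₁ ≤ q - d := by
        by_contra hc
        push_neg at hc
        exact h1 (hy ▸ hlow _ hc)
      refine ⟨q - d, ⟨⟨hwN, hwq⟩, ?_⟩, hy.symm⟩
      intro hc
      exact h1 (hy ▸ hc.2)
    · rintro ⟨w, ⟨⟨hw1, hw2⟩, hw3⟩, rfl⟩
      refine ⟨?_, ?_, ?_⟩
      · intro hc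
        exact hw3 ⟨hw1, hc⟩
      · rw [Int.modEq_iff_dvd]
        exact ⟨q - w, by ring⟩
      · nlinarith
  have hDim : {b : ℤ | b ∈ B ∧ b ≡ i + (t:ℤ)*q [ZMOD (t:ℤ)] ∧ i + (t:ℤ)*q ≤ b}
      = (fun w => i + (t:ℤ)*w) '' {w : ℤ | q ≤ w ∧ i + (t:ℤ)*w ∈ B} := by
    ext y
    simp only [Set.mem_image, Set.mem_setOf_eq]
    constructor
    · rintro ⟨h1, h2, h3⟩
      obtain ⟨d, hd⟩ := h2.dvd
      have hy : y = i + (t:ℤ)*(q - d) := by linear_combination -hd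
      have hwq : q ≤ q - d := by nlinarith [hy, h3]
      exact ⟨q - d, ⟨hwq, hy ▸ h1⟩, hy.symm⟩
    · rintro ⟨w, ⟨hw1, hw2⟩, rfl⟩
      refine ⟨hw2, ?_, ?_⟩
      · rw [Int.modEq_iff_dvd]
        exact ⟨q - w, by ring⟩
      · nlinarith
  show _ ↔ _
  simp only [coreBeta, Set.mem_setOf_eq]
  rw [hGim, hDim, Set.ncard_image_of_injective _ hinj, Set.ncard_image_of_injective _ hinj]
  rcases le_or_gt N₁ q with hq | hq
  · have hU : {w : ℤ | q ≤ w ∧ i + (t:ℤ)*w ∈ B}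
        = {m : ℤ | N₁ ≤ m ∧ i + (t:ℤ)*m ∈ B} \ Set.Ico N₁ q := by
      ext w
      simp only [Set.mem_setOf_eq, Set.mem_diff, Set.mem_Ico]
      constructor
      · rintro ⟨h1, h2⟩
        exact ⟨⟨le_trans hq h1, h2⟩, fun hc => absurd h1 (not_le.2 hc.2)⟩
      · rintro ⟨⟨h1, h2⟩, h3⟩
        refine ⟨?_, h2⟩
        by_contra hc
        push_neg at hc
        exact h3 ⟨h1, hc⟩
    rw [hU]
    have e1 := Set.ncard_inter_add_ncard_diff_eq_ncard (Set.Ico N₁ q)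
      {m : ℤ | N₁ ≤ m ∧ i + (t:ℤ)*m ∈ B} (Set.finite_Ico N₁ q)
    have e2 := Set.ncard_inter_add_ncard_diff_eq_ncard
      {m : ℤ | N₁ ≤ m ∧ i + (t:ℤ)*m ∈ B} (Set.Ico N₁ q) (hfin N₁)
    have e3 : (Set.Ico N₁ q ∩ {m : ℤ | N₁ ≤ m ∧ i + (t:ℤ)*m ∈ B}).ncard
        = ({m : ℤ | N₁ ≤ m ∧ i + (t:ℤ)*m ∈ B} ∩ Set.Ico N₁ q).ncard := by
      rw [Set.inter_comm]
    have e4 : (Set.Ico N₁ q).ncard = (q - N₁).toNat := by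
      rw [← Finset.coe_Ico, Set.ncard_coe_finset, Int.card_Ico]
    omega
  · have hA : Set.Ico N₁ q = ∅ := Set.Ico_eq_empty (by omega)
    have hxB : i + (t:ℤ)*q ∈ B := hlow q hq
    have hne : ({w : ℤ | q ≤ w ∧ i + (t:ℤ)*w ∈ B}).Nonempty := ⟨q, le_refl q, hxB⟩
    have h0 : (Set.Ico N₁ q \ {m : ℤ | N₁ ≤ m ∧ i + (t:ℤ)*m ∈ B}).ncard = 0 := by
      rw [hA]
      simp
    have hpos : 0 < ({w : ℤ | q ≤ w ∧ i + (t:ℤ)*w ∈ B}).ncard := (Set.ncard_pos (hfin q)).mpr hne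
    rw [h0]
    constructor
    · intro _
      have h5 : (0:ℤ) ≤ (({m : ℤ | N₁ ≤ m ∧ i + (t:ℤ)*m ∈ B}).ncard : ℤ) := Int.natCast_nonneg _
      omega
    · intro _
      exact hpos

lemma sumres (t : ℕ) (ht : 0 < t) (N₁ : ℤ) {S : Set ℤ} (hS : S.Finite)
    (hsub : ∀ x ∈ S, (t:ℤ) * N₁ ≤ x) :
    S.ncard = ∑ i ∈ Finset.range t,
      ({m : ℤ | N₁ ≤ m ∧ (i:ℤ) + (t:ℤ)*m ∈ S}).ncard := by
  classical
  have htz : (0:ℤ) < t := by exact_mod_cast ht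
  have key : ∀ F : Finset ℤ, (∀ x ∈ F, (t:ℤ)*N₁ ≤ x) →
      ((F : Set ℤ)).ncard = ∑ i ∈ Finset.range t,
        ({m : ℤ | N₁ ≤ m ∧ (i:ℤ) + (t:ℤ)*m ∈ (F : Set ℤ)}).ncard := by
    intro F
    induction F using Finset.induction_on with
    | empty =>
      intro _
      simp
    | @insert a F ha ih =>
      intro hsub'
      have hsubF : ∀ x ∈ F, (t:ℤ)*N₁ ≤ x := fun x hx => hsub' x (Finset.mem_insert_of_mem hx)
      have haN : (t:ℤ)*N₁ ≤ a := hsub' a (Finset.mem_insert_self a F)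
      set i₀ : ℕ := (a % (t:ℤ)).toNat with hi₀
      have hmod0 : 0 ≤ a % (t:ℤ) := Int.emod_nonneg a htz.ne'
      have hmodt : a % (t:ℤ) < t := Int.emod_lt_of_pos a htz
      have hi₀cast : ((i₀ : ℕ) : ℤ) = a % t := Int.toNat_of_nonneg hmod0
      have hi₀t : i₀ < t := by omega
      have hadiv : N₁ ≤ a / (t:ℤ) := by
        rw [Int.le_ediv_iff_mul_le htz]
        linarith
      have haeq : (i₀ : ℤ) + (t:ℤ) * (a / t) = a := by
        rw [hi₀cast]
        have h := Int.mul_ediv_add_emod a (t:ℤ)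
        linarith
      have huniq : ∀ i : ℕ, i < t → ∀ m : ℤ,
          ((i:ℤ) + (t:ℤ)*m = a) ↔ (i = i₀ ∧ m = a / t) := by
        intro i hi m
        constructor
        · intro he
          have h1 : a % (t:ℤ) = (i:ℤ) := by
            rw [← he, Int.add_mul_emod_self_left]
            exact Int.emod_eq_of_lt (Int.natCast_nonneg i) (by exact_mod_cast hi)
          have h2 : i = i₀ := by omega
          have h4 : ((i₀:ℕ) : ℤ) = (i:ℤ) := by omega
          have h3 : (t:ℤ)*m = (t:ℤ)*(a/t) := by linarith [haeq, he]
          exact ⟨h2, mul_left_cancel₀ htz.ne' h3⟩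
        · rintro ⟨rfl, rfl⟩
          exact haeq
      have hTfin : ∀ i : ℕ, ({m : ℤ | N₁ ≤ m ∧ (i:ℤ) + (t:ℤ)*m ∈ (F : Set ℤ)}).Finite := by
        intro i
        have hinj : Set.InjOn (fun m : ℤ => (i:ℤ) + (t:ℤ)*m)
            ((fun m : ℤ => (i:ℤ) + (t:ℤ)*m) ⁻¹' (F : Set ℤ)) := by
          intro u _ v _ huv
          simp only [add_right_inj] at huv
          exact mul_left_cancel₀ htz.ne' huv
        apply Set.Finite.subset (Set.Finite.preimage hinj F.finite_toSet)
        rintro m ⟨_, h2⟩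
        exact h2
      have hset : ∀ i : ℕ, i < t →
          {m : ℤ | N₁ ≤ m ∧ (i:ℤ) + (t:ℤ)*m ∈ ((insert a F : Finset ℤ) : Set ℤ)}
            = if i = i₀ then
                insert (a / (t:ℤ)) {m : ℤ | N₁ ≤ m ∧ (i:ℤ) + (t:ℤ)*m ∈ (F : Set ℤ)}
              else {m : ℤ | N₁ ≤ m ∧ (i:ℤ) + (t:ℤ)*m ∈ (F : Set ℤ)} := by
        intro i hi
        ext m
        simp only [Finset.coe_insert, Set.mem_insert_iff, Set.mem_setOf_eq, Finset.mem_coe]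
        split_ifs with hii
        · simp only [Set.mem_insert_iff, Set.mem_setOf_eq]
          constructor
          · rintro ⟨h1, (h2 | h2)⟩
            · left
              exact ((huniq i hi m).mp h2).2
            · right
              exact ⟨h1, h2⟩
          · rintro (rfl | ⟨h1, h2⟩)
            · refine ⟨hadiv, Or.inl ?_⟩
              subst hii
              exact haeq
            · exact ⟨h1, Or.inr h2⟩
        · constructor
          · rintro ⟨h1, (h2 | h2)⟩
            · exact absurd ((huniq i hi m).mp h2).1 hii
            · exact ⟨h1, h2⟩
          · rintro ⟨h1, h2⟩
            exact ⟨h1, Or.inr h2⟩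
      have hcard : ∀ i : ℕ, i < t →
          ({m : ℤ | N₁ ≤ m ∧ (i:ℤ) + (t:ℤ)*m ∈ ((insert a F : Finset ℤ) : Set ℤ)}).ncard
            = ({m : ℤ | N₁ ≤ m ∧ (i:ℤ) + (t:ℤ)*m ∈ (F : Set ℤ)}).ncard
              + if i = i₀ then 1 else 0 := by
        intro i hi
        rw [hset i hi]
        split_ifs with hii
        · rw [Set.ncard_insert_of_notMem ?_ (hTfin i)]
          intro hc
          apply ha
          have h2 := hc.2
          rw [show ((i:ℤ) + (t:ℤ)*(a / t)) = a by subst hii; exact haeq] at h2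
          exact h2
        · rfl
      calc ((insert a F : Finset ℤ) : Set ℤ).ncard
          = ((F : Set ℤ)).ncard + 1 := by
            rw [Finset.coe_insert,
              Set.ncard_insert_of_notMem (by simpa using ha) F.finite_toSet]
        _ = (∑ i ∈ Finset.range t,
              ({m : ℤ | N₁ ≤ m ∧ (i:ℤ) + (t:ℤ)*m ∈ (F : Set ℤ)}).ncard) + 1 := by
            rw [ih hsubF]
        _ = ∑ i ∈ Finset.range t,
              (({m : ℤ | N₁ ≤ m ∧ (i:ℤ) + (t:ℤ)*m ∈ (F : Set ℤ)}).ncard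
                + if i = i₀ then 1 else 0) := by
            rw [Finset.sum_add_distrib, Finset.sum_ite_eq' (Finset.range t) i₀ (fun _ => 1)]
            simp [Finset.mem_range.mpr hi₀t]
        _ = ∑ i ∈ Finset.range t,
              ({m : ℤ | N₁ ≤ m ∧ (i:ℤ) + (t:ℤ)*m ∈ ((insert a F : Finset ℤ) : Set ℤ)}).ncard :=
            (Finset.sum_congr rfl (fun i hi => hcard i (Finset.mem_range.mp hi))).symm
  have h1 := key hS.toFinset (fun x hx => hsub x (hS.mem_toFinset.mp hx))
  rw [hS.coe_toFinset] at h1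
  exact h1

lemma core_exists (t : ℕ) (ht : 0 < t) (l : LPartition) :
    ∃ m : LPartition, beta 0 m = coreBeta t (beta 0 l) := by
  obtain ⟨⟨N, hN⟩, ⟨Mu, hMu⟩⟩ := valid_beta 0 l
  have htz : (0:ℤ) < t := by exact_mod_cast ht
  set N₁ : ℤ := -(N.natAbs : ℤ) - 1 with hN₁def
  have hN₁neg : N₁ < 0 := by omega
  have hN₁N : N₁ < N := by omega
  have htN₁ : (t:ℤ)*N₁ ≤ N₁ := by nlinarith
  have hlo : ∀ x : ℤ, x < (t:ℤ)*N₁ → x ∈ beta 0 l := by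
    intro x hx
    exact hN x (by omega)
  have hmem : ∀ (i q : ℤ), 0 ≤ i → i < (t:ℤ) →
      ((i + (t:ℤ)*q) ∈ coreBeta t (beta 0 l) ↔
        q < N₁ + (({m : ℤ | N₁ ≤ m ∧ i + (t:ℤ)*m ∈ beta 0 l}).ncard : ℤ)) :=
    fun i q hi0 hit => coreBeta_mem_iff t ht hlo hMu i q hi0 hit
  have hxiq : ∀ x : ℤ, x % (t:ℤ) + (t:ℤ) * (x / t) = x := by
    intro x
    have h := Int.mul_ediv_add_emod x (t:ℤ)
    linarith
  have hmem' : ∀ x : ℤ, x ∈ coreBeta t (beta 0 l) ↔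
      x / (t:ℤ) < N₁ + (({m : ℤ | N₁ ≤ m ∧ x % (t:ℤ) + (t:ℤ)*m ∈ beta 0 l}).ncard : ℤ) := by
    intro x
    have h := hmem (x % t) (x / t) (Int.emod_nonneg x htz.ne') (Int.emod_lt_of_pos x htz)
    rw [hxiq x] at h
    exact h
  have hBfin : ((beta 0 l) ∩ Set.Ici ((t:ℤ)*N₁)).Finite :=
    Set.Finite.subset (Set.finite_Ico _ Mu) (fun x hx => ⟨hx.2, hMu x hx.1⟩)
  set K : ℕ := ((beta 0 l) ∩ Set.Ici ((t:ℤ)*N₁)).ncard with hKdef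
  have hkK : ∀ i : ℤ, 0 ≤ i → ({m : ℤ | N₁ ≤ m ∧ i + (t:ℤ)*m ∈ beta 0 l}).ncard ≤ K := by
    intro i hi
    have hinj : Function.Injective (fun m : ℤ => i + (t:ℤ)*m) := by
      intro u v huv
      simp only [add_right_inj] at huv
      exact mul_left_cancel₀ htz.ne' huv
    have hsub : (fun m : ℤ => i + (t:ℤ)*m) '' {m : ℤ | N₁ ≤ m ∧ i + (t:ℤ)*m ∈ beta 0 l}
        ⊆ (beta 0 l) ∩ Set.Ici ((t:ℤ)*N₁) := by
      rintro y ⟨m, ⟨h1, h2⟩, rfl⟩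
      refine ⟨h2, ?_⟩
      have h3 : (t:ℤ)*N₁ ≤ (t:ℤ)*m := mul_le_mul_of_nonneg_left h1 htz.le
      simp only [Set.mem_Ici]
      omega
    calc ({m : ℤ | N₁ ≤ m ∧ i + (t:ℤ)*m ∈ beta 0 l}).ncard
        = ((fun m : ℤ => i + (t:ℤ)*m) '' {m : ℤ | N₁ ≤ m ∧ i + (t:ℤ)*m ∈ beta 0 l}).ncard :=
          (Set.ncard_image_of_injective _ hinj).symm
      _ ≤ K := Set.ncard_le_ncard hsub hBfin
  have hClo : ∀ x : ℤ, x < (t:ℤ)*N₁ → x ∈ coreBeta t (beta 0 l) := by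
    intro x hx
    rw [hmem' x]
    have h1 : x / (t:ℤ) < N₁ := by
      rw [Int.ediv_lt_iff_lt_mul htz]
      linarith [mul_comm (t:ℤ) N₁]
    have h2 : (0:ℤ) ≤ (({m : ℤ | N₁ ≤ m ∧ x % (t:ℤ) + (t:ℤ)*m ∈ beta 0 l}).ncard : ℤ) :=
      Int.natCast_nonneg _
    omega
  have hChi : ∀ x ∈ coreBeta t (beta 0 l), x < (N₁ + K)*(t:ℤ) := by
    intro x hx
    rw [hmem' x] at hx
    have h2 : (({m : ℤ | N₁ ≤ m ∧ x % (t:ℤ) + (t:ℤ)*m ∈ beta 0 l}).ncard : ℤ) ≤ K := by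
      exact_mod_cast hkK (x % t) (Int.emod_nonneg x htz.ne')
    have h3 : x / (t:ℤ) < N₁ + K := by omega
    exact (Int.ediv_lt_iff_lt_mul htz).mp h3
  obtain ⟨m, ρ, hmρ⟩ := exists_of_valid ⟨⟨(t:ℤ)*N₁, hClo⟩, ⟨(N₁ + K)*(t:ℤ), hChi⟩⟩
  have e1 : ρ = (t:ℤ)*N₁ + (((coreBeta t (beta 0 l)) ∩ Set.Ici ((t:ℤ)*N₁)).ncard : ℤ) :=
    chg_eq hmρ hClo hChi
  have e2 : (0:ℤ) = (t:ℤ)*N₁ + (((beta 0 l) ∩ Set.Ici ((t:ℤ)*N₁)).ncard : ℤ) :=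
    chg_eq rfl hlo hMu
  have hCfin : ((coreBeta t (beta 0 l)) ∩ Set.Ici ((t:ℤ)*N₁)).Finite :=
    Set.Finite.subset (Set.finite_Ico _ ((N₁ + K)*(t:ℤ))) (fun x hx => ⟨hx.2, hChi x hx.1⟩)
  have s1 := sumres t ht N₁ hCfin (fun x hx => hx.2)
  have s2 := sumres t ht N₁ hBfin (fun x hx => hx.2)
  have hinner : ∀ i : ℕ, i < t →
      ({m : ℤ | N₁ ≤ m ∧ (i:ℤ) + (t:ℤ)*m ∈ (coreBeta t (beta 0 l)) ∩ Set.Ici ((t:ℤ)*N₁)}).ncard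
        = ({m : ℤ | N₁ ≤ m ∧ (i:ℤ) + (t:ℤ)*m ∈ (beta 0 l) ∩ Set.Ici ((t:ℤ)*N₁)}).ncard := by
    intro i hi
    have hi0 : (0:ℤ) ≤ i := Int.natCast_nonneg i
    have hit : (i:ℤ) < t := by exact_mod_cast hi
    have hici : ∀ m : ℤ, N₁ ≤ m → (t:ℤ)*N₁ ≤ (i:ℤ) + (t:ℤ)*m := by
      intro m hm
      have h3 : (t:ℤ)*N₁ ≤ (t:ℤ)*m := mul_le_mul_of_nonneg_left hm htz.le
      omega
    have hCset : {m : ℤ | N₁ ≤ m ∧ (i:ℤ) + (t:ℤ)*m ∈ (coreBeta t (beta 0 l)) ∩ Set.Ici ((t:ℤ)*N₁)}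
        = Set.Ico N₁ (N₁ + (({m : ℤ | N₁ ≤ m ∧ (i:ℤ) + (t:ℤ)*m ∈ beta 0 l}).ncard : ℤ)) := by
      ext m
      simp only [Set.mem_setOf_eq, Set.mem_inter_iff, Set.mem_Ici, Set.mem_Ico]
      constructor
      · rintro ⟨h1, h2, _⟩
        exact ⟨h1, (hmem (i:ℤ) m hi0 hit).mp h2⟩
      · rintro ⟨h1, h2⟩
        exact ⟨h1, (hmem (i:ℤ) m hi0 hit).mpr h2, hici m h1⟩
    have hBset : {m : ℤ | N₁ ≤ m ∧ (i:ℤ) + (t:ℤ)*m ∈ (beta 0 l) ∩ Set.Ici ((t:ℤ)*N₁)}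
        = {m : ℤ | N₁ ≤ m ∧ (i:ℤ) + (t:ℤ)*m ∈ beta 0 l} := by
      ext m
      simp only [Set.mem_setOf_eq, Set.mem_inter_iff, Set.mem_Ici]
      constructor
      · rintro ⟨h1, h2, _⟩
        exact ⟨h1, h2⟩
      · rintro ⟨h1, h2⟩
        exact ⟨h1, h2, hici m h1⟩
    rw [hCset, hBset, ← Finset.coe_Ico, Set.ncard_coe_finset, Int.card_Ico]
    omega
  have hsum : ((coreBeta t (beta 0 l)) ∩ Set.Ici ((t:ℤ)*N₁)).ncard
      = ((beta 0 l) ∩ Set.Ici ((t:ℤ)*N₁)).ncard := by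
    rw [s1, s2]
    exact Finset.sum_congr rfl (fun i hi => hinner i (Finset.mem_range.mp hi))
  have hρ0 : ρ = 0 := by omega
  rw [hρ0] at hmρ
  exact ⟨m, hmρ⟩

end LPartition

open LPartition in
/-- Each component of the `s`-quotient of the `rs`-core of `λ` is the `r`-core of the
corresponding component of the `s`-quotient of `λ`. -/
theorem quot_core_mul (r s : ℕ) (hr : 0 < r) (hs : 0 < s) (l : LPartition) (j : ZMod s) :
    quot s (core (r * s) l) j = core r (quot s l j) := by
  obtain ⟨m, hm⟩ := core_exists (r * s) (Nat.mul_pos hr hs) l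
  have hcore : core (r * s) l = m := ofBeta_eq hm
  have hQvalid : Valid {z : ℤ | ((j.val : ℤ) + (s:ℤ) * z) ∈ beta 0 l} := by
    obtain ⟨⟨N, hN⟩, ⟨Mu, hMu⟩⟩ := valid_beta 0 l
    have hs1 : (1:ℤ) ≤ s := by exact_mod_cast hs
    constructor
    · refine ⟨-((((j.val : ℤ) - N).natAbs : ℤ)), fun z hz => ?_⟩
      have hz0 : z ≤ -1 := by omega
      have h1 : (s:ℤ)*z ≤ 1*z := mul_le_mul_of_nonpos_right hs1 (by omega)
      have h2 : ((j.val : ℤ) - N) ≤ (((j.val : ℤ) - N).natAbs : ℤ) := Int.le_natAbs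
      apply hN
      omega
    · refine ⟨max (Mu - (j.val : ℤ)) 1, fun z hz => ?_⟩
      have h2 := hMu _ hz
      rcases le_or_gt z 0 with h | h
      · exact lt_of_le_of_lt h (lt_of_lt_of_le one_pos (le_max_right _ _))
      · have h3 : z ≤ (s:ℤ)*z := le_mul_of_one_le_left h.le hs1
        have h4 : z < Mu - (j.val : ℤ) := by omega
        exact lt_of_lt_of_le h4 (le_max_left _ _)
  obtain ⟨l', c, hl'⟩ := exists_of_valid hQvalid
  have hquot : quot s l j = l' := ofBeta_eq hl'
  obtain ⟨m', hm'⟩ := core_exists r hr l'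
  have hrhs : core r (quot s l j) = m' := by
    rw [hquot]
    exact ofBeta_eq hm'
  have h1 : beta 0 (core (r * s) l) = coreBeta (r * s) (beta 0 l) := by
    rw [hcore]
    exact hm
  have h2 : quot s (core (r * s) l) j
      = ofBeta (coreBeta r {z : ℤ | ((j.val : ℤ) + (s:ℤ) * z) ∈ beta 0 l}) := by
    show ofBeta {z : ℤ | ((j.val : ℤ) + (s:ℤ) * z) ∈ beta 0 (core (r * s) l)} = _
    rw [h1, main_bij r s hr hs ((j.val : ℤ)) (beta 0 l)]
  have hQshift : {z : ℤ | ((j.val : ℤ) + (s:ℤ) * z) ∈ beta 0 l}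
      = (fun x => x + c) '' beta 0 l' := by
    rw [← beta_shift]
    exact hl'.symm
  have h3 : coreBeta r {z : ℤ | ((j.val : ℤ) + (s:ℤ) * z) ∈ beta 0 l} = beta c m' := by
    rw [hQshift, coreBeta_shift, ← hm', ← beta_shift]
  rw [h2, h3, hrhs]
  exact ofBeta_eq rfl
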